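/- Let X be a metric space carrying an Ahlfors δ-regular measure μ whose support equals X, and let f be a dimension function satisfying r^{-δ}f(r) → ∞ as r → 0. Then H^f(B) = ∞ for every ball B in X with positive radius. -/

import Mathlib

open MeasureTheory Filter Set
open scoped ENNReal NNReal

noncomputable def hausdorffWith {X : Type*} [MetricSpace X] [MeasurableSpace X] [BorelSpace X]
    (f : ℝ → ℝ) : Measure X :=
  Measure.mkMetric (fun d : ℝ≥0∞ => ENNReal.ofReal (f d.toReal))

/-- If `X` carries an Ahlfors `δ`-regular measure with full support and `f` is a dimension
function with `r^{-δ} f(r) → ∞` as `r → 0⁺`, then `H^f(B) = ∞` for every ball of positive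
radius. -/
theorem stmt4 {X : Type*} [MetricSpace X] [MeasurableSpace X] [BorelSpace X]
    (δ : ℝ) (hδ : 0 < δ) (μ : Measure X)
    (c₁ c₂ r₀ : ℝ) (hc₁ : 0 < c₁) (hc₁1 : c₁ < 1) (hc₂ : 1 < c₂) (hr₀ : 0 < r₀)
    -- μ has full support:
    (hsupp : ∀ x : X, ∀ r : ℝ, 0 < r → 0 < μ (Metric.ball x r))
    -- Ahlfors δ-regularity:
    (hreg : ∀ x : X, ∀ r : ℝ, 0 < r → r ≤ r₀ →
      ENNReal.ofReal (c₁ * r ^ δ) ≤ μ (Metric.ball x r) ∧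
        μ (Metric.ball x r) ≤ ENNReal.ofReal (c₂ * r ^ δ))
    (f : ℝ → ℝ) (hf0 : f 0 = 0) (hfmono : MonotoneOn f (Set.Ici 0))
    (hfcont : ContinuousOn f (Set.Ici 0))
    (hlim : Tendsto (fun r : ℝ => r ^ (-δ) * f r) (nhdsWithin 0 (Set.Ioi 0)) atTop) :
    ∀ x : X, ∀ r : ℝ, 0 < r → hausdorffWith f (Metric.ball x r) = ∞ := by
  -- key: for each n, (n:ℝ≥0∞) • μ ≤ hausdorffWith f
  have key : ∀ n : ℕ, ((n : ℝ≥0∞) • μ) ≤ hausdorffWith f := by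
    intro n
    -- from hlim, get ε > 0 with f ρ ≥ n * c₂ * ρ^δ for ρ ∈ (0, ε)
    have hev : ∀ᶠ ρ in nhdsWithin 0 (Set.Ioi 0),
        (n : ℝ) * c₂ ≤ ρ ^ (-δ) * f ρ := hlim.eventually (eventually_ge_atTop _)
    obtain ⟨ε, hε, hball'⟩ := Metric.mem_nhdsWithin_iff.1 hev
    have hball : ∀ {ρ : ℝ}, dist ρ 0 < ε → 0 < ρ → (n : ℝ) * c₂ ≤ ρ ^ (-δ) * f ρ :=
      fun hd hρ => hball' ⟨Metric.mem_ball.2 hd, hρ⟩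
    set ε' : ℝ := min ε r₀ / 2 with hε'def
    have hε'pos : 0 < ε' := by positivity
    have hflo : ∀ ρ : ℝ, 0 < ρ → ρ < min ε r₀ → (n : ℝ) * c₂ * ρ ^ δ ≤ f ρ := by
      intro ρ hρ hρlt
      have hρε : dist ρ (0:ℝ) < ε := by
        rw [Real.dist_eq, sub_zero, abs_of_pos hρ]
        exact hρlt.trans_le (min_le_left _ _)
      have h1 := hball hρε hρ
      have hpow : (0:ℝ) < ρ ^ δ := Real.rpow_pos_of_pos hρ δ
      have : (n : ℝ) * c₂ * ρ ^ δ ≤ ρ ^ (-δ) * f ρ * ρ ^ δ :=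
        mul_le_mul_of_nonneg_right h1 hpow.le
      calc (n : ℝ) * c₂ * ρ ^ δ ≤ ρ ^ (-δ) * f ρ * ρ ^ δ := this
        _ = (ρ ^ (-δ) * ρ ^ δ) * f ρ := by ring
        _ = f ρ := by
            rw [← Real.rpow_add hρ, neg_add_cancel, Real.rpow_zero, one_mul]
    refine Measure.le_mkMetric _ _ (ENNReal.ofReal ε') (by simp [hε'pos]) ?_
    intro s hs
    rcases s.eq_empty_or_nonempty with rfl | ⟨x, hx⟩
    · simp
    have hsne : EMetric.diam s ≠ ∞ := by
      intro h; rw [show Metric.ediam s = ∞ from h] at hs; exact (ENNReal.ofReal_lt_top.not_ge hs).elim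
    set D : ℝ := (EMetric.diam s).toReal with hDdef
    have hD0 : 0 ≤ D := ENNReal.toReal_nonneg
    have hDlt : D < min ε r₀ := by
      have : D ≤ ε' := by
        rw [hDdef]
        exact (ENNReal.toReal_le_toReal hsne ENNReal.ofReal_ne_top).2 hs
          |>.trans (ENNReal.toReal_ofReal hε'pos.le).le
      calc D ≤ ε' := this
        _ < min ε r₀ := by
            rw [hε'def]
            exact half_lt_self (lt_min hε hr₀)
    -- n * μ s ≤ ofReal (f ρ) for each ρ ∈ (D, min ε r₀)
    have hstep : ∀ ρ : ℝ, ρ ∈ Set.Ioo D (min ε r₀) →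
        ((n : ℝ≥0∞) • μ) s ≤ ENNReal.ofReal (f ρ) := by
      intro ρ ⟨hρD, hρlt⟩
      have hρ0 : 0 < ρ := hD0.trans_lt hρD
      have hsub : s ⊆ Metric.ball x ρ := by
        intro y hy
        have := EMetric.edist_le_diam_of_mem hy hx
        have hd : edist y x < ENNReal.ofReal ρ := by
          calc edist y x ≤ EMetric.diam s := this
            _ < ENNReal.ofReal ρ := by
                rw [← ENNReal.ofReal_toReal hsne]
                exact ENNReal.ofReal_lt_ofReal_iff hρ0 |>.2 hρD
        exact Metric.mem_ball.2 (edist_lt_ofReal.1 hd)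
      have hμ : μ s ≤ ENNReal.ofReal (c₂ * ρ ^ δ) :=
        (measure_mono hsub).trans (hreg x ρ hρ0 (hρlt.le.trans (min_le_right _ _))).2
      have hfρ : (n : ℝ) * (c₂ * ρ ^ δ) ≤ f ρ := by
        have := hflo ρ hρ0 hρlt
        linarith [this]
      calc ((n : ℝ≥0∞) • μ) s = (n : ℝ≥0∞) * μ s := rfl
        _ ≤ (n : ℝ≥0∞) * ENNReal.ofReal (c₂ * ρ ^ δ) := by
            exact mul_le_mul_right hμ _
        _ = ENNReal.ofReal ((n : ℝ) * (c₂ * ρ ^ δ)) := by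
            rw [← ENNReal.ofReal_natCast n, ← ENNReal.ofReal_mul (Nat.cast_nonneg n)]
        _ ≤ ENNReal.ofReal (f ρ) := ENNReal.ofReal_le_ofReal hfρ
    -- take ρ → D⁺, using continuity of f
    have htend : Tendsto (fun ρ => ENNReal.ofReal (f ρ)) (nhdsWithin D (Set.Ioi D))
        (nhds (ENNReal.ofReal (f D))) := by
      refine (ENNReal.continuous_ofReal.continuousAt.tendsto.comp ?_)
      have := (hfcont D (Set.mem_Ici.2 hD0)).tendsto
      exact this.mono_left (nhdsWithin_mono D (fun y hy => le_of_lt (hD0.trans_lt hy)))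
    have hevent : ∀ᶠ ρ in nhdsWithin D (Set.Ioi D),
        ((n : ℝ≥0∞) • μ) s ≤ ENNReal.ofReal (f ρ) := by
      filter_upwards [Ioo_mem_nhdsGT_of_mem ⟨le_refl D, hDlt⟩] with ρ hρ
      exact hstep ρ hρ
    exact ge_of_tendsto htend hevent
  intro x r hr
  set r' : ℝ := min r r₀ with hr'
  have hr'pos : 0 < r' := lt_min hr hr₀
  have hμB0 : 0 < μ (Metric.ball x r') := hsupp x r' hr'pos
  have hμBtop : μ (Metric.ball x r') ≠ ∞ := by
    have := (hreg x r' hr'pos (min_le_right _ _)).2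
    exact (this.trans_lt ENNReal.ofReal_lt_top).ne
  by_contra h
  have hle : ∀ n : ℕ, (n : ℝ≥0∞) * μ (Metric.ball x r') ≤ hausdorffWith f (Metric.ball x r) := by
    intro n
    calc (n : ℝ≥0∞) * μ (Metric.ball x r') = ((n : ℝ≥0∞) • μ) (Metric.ball x r') := rfl
      _ ≤ hausdorffWith f (Metric.ball x r') := key n _
      _ ≤ hausdorffWith f (Metric.ball x r) :=
          measure_mono (Metric.ball_subset_ball (min_le_left _ _))
  have hdiv : ∀ n : ℕ, (n : ℝ≥0∞) ≤ hausdorffWith f (Metric.ball x r) / μ (Metric.ball x r') :=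
    fun n => ENNReal.le_div_iff_mul_le (Or.inl hμB0.ne') (Or.inl hμBtop) |>.2 (hle n)
  have : hausdorffWith f (Metric.ball x r) / μ (Metric.ball x r') = ∞ :=
    ENNReal.eq_top_of_forall_nnreal_le fun q =>
      le_trans (by exact_mod_cast Nat.le_ceil q) (hdiv ⌈q⌉₊)
  rw [ENNReal.div_eq_top] at this
  rcases this with ⟨_, h2⟩ | ⟨h1, _⟩
  · exact hμB0.ne' h2
  · exact h h1
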